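/- Let σ = co({x_j}_{j=0}^n) ⊂ ℝ^n be a simplex with affinely independent vertices, g : ℝ^n → ℝ^n twice continuously differentiable on an open set containing σ with |∂²g^{(p)}/∂x^{(q)}∂x^{(r)}(ξ)| ≤ β for all ξ ∈ σ and all p, q, r, V : ℝ^n → ℝ affine with gradient ∇V, and l ∈ ℝ^n with l ≥ |∇V| entrywise. Let b₂ > 0 and suppose that at each vertex j: if x_j = 0 then V(x_j) = 0 and g(x_j)ᵀ∇V + c_j β 1_nᵀ l ≤ 0, while if x_j ≠ 0 then V(x_j) > 0 and g(x_j)ᵀ∇V + c_j β 1_nᵀ l ≤ −b₂. Assume at least one vertex is nonzero and set b̃₂ := min{ b₂ / V(x_j) : x_j ≠ 0 }. Then the Dini derivative of V along g satisfies D⁺V(x) ≤ −b̃₂ · V(x) for every x ∈ σ. -/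

import Mathlib

open Filter Topology Set
open scoped BigOperators

/-- Second partial derivative `∂²φ/∂x^{(q)}∂x^{(r)}` of a scalar function on ℝⁿ. -/
noncomputable def secondPartial {n : ℕ} (φ : EuclideanSpace ℝ (Fin n) → ℝ) (q r : Fin n)
    (ξ : EuclideanSpace ℝ (Fin n)) : ℝ :=
  fderiv ℝ (fun y => fderiv ℝ φ y (EuclideanSpace.single r 1)) ξ (EuclideanSpace.single q 1)

/-- Dini derivative of `V` at `y` along the vector field `g`. -/
noncomputable def diniDeriv {n : ℕ} (V : EuclideanSpace ℝ (Fin n) → ℝ)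
    (g : EuclideanSpace ℝ (Fin n) → EuclideanSpace ℝ (Fin n))
    (y : EuclideanSpace ℝ (Fin n)) : EReal :=
  Filter.limsup (fun h : ℝ => (((V (y + h • g y) - V y) / h : ℝ) : EReal)) (𝓝[>] (0 : ℝ))


lemma euclid_decomp {n : ℕ} (v : EuclideanSpace ℝ (Fin n)) :
    v = ∑ i, v i • EuclideanSpace.single i (1:ℝ) := by
  have := (EuclideanSpace.basisFun (Fin n) ℝ).sum_repr v
  simp only [EuclideanSpace.basisFun_apply, EuclideanSpace.basisFun_repr] at this
  exact this.symm

-- bilinear expansion of the second derivative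
lemma secondPartial_eq {n : ℕ} {φ : EuclideanSpace ℝ (Fin n) → ℝ}
    {ξ : EuclideanSpace ℝ (Fin n)}
    (hd : DifferentiableAt ℝ (fderiv ℝ φ) ξ) (q r : Fin n) :
    secondPartial φ q r ξ
      = fderiv ℝ (fderiv ℝ φ) ξ (EuclideanSpace.single q 1) (EuclideanSpace.single r 1) := by
  unfold secondPartial
  have : fderiv ℝ (fun y => fderiv ℝ φ y (EuclideanSpace.single r (1:ℝ))) ξ
      = (fderiv ℝ (fderiv ℝ φ) ξ).flip (EuclideanSpace.single r 1) := by
    have h := fderiv_clm_apply (c := fderiv ℝ φ)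
      (u := fun _ => EuclideanSpace.single r (1:ℝ)) hd (differentiableAt_const _)
    rw [h]
    simp
  rw [this]
  rfl

lemma bilinear_bound {n : ℕ} {φ : EuclideanSpace ℝ (Fin n) → ℝ}
    {ξ : EuclideanSpace ℝ (Fin n)} {β : ℝ}
    (hd : DifferentiableAt ℝ (fderiv ℝ φ) ξ)
    (hβ : ∀ q r : Fin n, |secondPartial φ q r ξ| ≤ β)
    (v : EuclideanSpace ℝ (Fin n)) :
    |fderiv ℝ (fderiv ℝ φ) ξ v v| ≤ β * (∑ q, |v q|)^2 := by
  set H := fderiv ℝ (fderiv ℝ φ) ξ with hH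
  have hv := euclid_decomp v
  have h1 : ∀ w, H v w = ∑ q, v q * H (EuclideanSpace.single q 1) w := by
    intro w
    conv_lhs => rw [hv]
    rw [map_sum, ContinuousLinearMap.sum_apply]
    refine Finset.sum_congr rfl fun q _ => ?_
    rw [map_smul]
    rfl
  have h2 : ∀ q, H (EuclideanSpace.single q 1) v
      = ∑ r, v r * H (EuclideanSpace.single q 1) (EuclideanSpace.single r 1) := by
    intro q
    conv_lhs => rw [hv]
    rw [map_sum]
    refine Finset.sum_congr rfl fun r _ => ?_
    rw [map_smul]
    rfl
  have expand : H v v = ∑ q, ∑ r, v q * v r * (H (EuclideanSpace.single q 1) (EuclideanSpace.single r 1)) := by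
    rw [h1]
    refine Finset.sum_congr rfl fun q _ => ?_
    rw [h2, Finset.mul_sum]
    refine Finset.sum_congr rfl fun r _ => ?_
    ring
  rw [expand]
  have hb : ∀ q r : Fin n, |H (EuclideanSpace.single q 1) (EuclideanSpace.single r 1)| ≤ β := by
    intro q r
    rw [← secondPartial_eq hd q r]
    exact hβ q r
  calc |∑ q, ∑ r, v q * v r * (H (EuclideanSpace.single q 1) (EuclideanSpace.single r 1))|
      ≤ ∑ q, |∑ r, v q * v r * (H (EuclideanSpace.single q 1) (EuclideanSpace.single r 1))| :=
        Finset.abs_sum_le_sum_abs _ _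
    _ ≤ ∑ q, ∑ r, |v q * v r * (H (EuclideanSpace.single q 1) (EuclideanSpace.single r 1))| :=
        Finset.sum_le_sum fun q _ => Finset.abs_sum_le_sum_abs _ _
    _ ≤ ∑ q, ∑ r, |v q| * |v r| * β := by
        refine Finset.sum_le_sum fun q _ => Finset.sum_le_sum fun r _ => ?_
        rw [abs_mul, abs_mul]
        exact mul_le_mul_of_nonneg_left (hb q r) (by positivity)
    _ = β * (∑ q, |v q|)^2 := by
        simp only [← Finset.sum_mul, ← Finset.mul_sum]
        rw [sq]
        ring


/-- 1-D second-order Taylor bound. -/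
lemma taylor2 {f f' f'' : ℝ → ℝ} {M : ℝ}
    (hf : ∀ t ∈ Icc (0:ℝ) 1, HasDerivAt f (f' t) t)
    (hf' : ∀ t ∈ Icc (0:ℝ) 1, HasDerivAt f' (f'' t) t)
    (hM : ∀ t ∈ Icc (0:ℝ) 1, |f'' t| ≤ M) :
    |f 1 - f 0 - f' 0| ≤ M / 2 := by
  have hM0 : 0 ≤ M := le_trans (abs_nonneg _) (hM 0 (by norm_num))
  -- |f' t - f' 0| ≤ M * t on [0,1]
  have key : ∀ t ∈ Icc (0:ℝ) 1, |f' t - f' 0| ≤ M * t := by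
    intro t ht
    have := norm_image_sub_le_of_norm_deriv_le_segment'
      (f := f') (f' := f'') (a := (0:ℝ)) (b := 1)
      (fun s hs => (hf' s hs).hasDerivWithinAt)
      (fun s hs => hM s (Ico_subset_Icc_self hs)) t ht
    simpa using this
  -- upper: G t = f t - t*f' 0 - M/2 * t^2 has G' ≤ 0... use monotone of H = -(G)
  have habs : ∀ (ε : ℝ), ε = 1 ∨ ε = -1 →
      ε * (f 1 - f 0 - f' 0) ≤ M / 2 := by
    intro ε hε
    set G : ℝ → ℝ := fun t => (M/2) * t^2 + ε * t * f' 0 - ε * f t with hG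
    have hG' : ∀ t ∈ Icc (0:ℝ) 1, HasDerivAt G (M * t + ε * f' 0 - ε * f' t) t := by
      intro t ht
      have h1 : HasDerivAt (fun t : ℝ => (M/2) * t^2 + ε * t * f' 0) (M * t + ε * f' 0) t := by
        have h0 : HasDerivAt (fun t : ℝ => (M/2) * t^2 + ε * t * f' 0)
            ((M/2) * (2 * t^1) + (ε * 1 * f' 0)) t := by
          exact ((hasDerivAt_pow 2 t).const_mul (M/2)).add
            (((hasDerivAt_id t).const_mul ε).mul_const (f' 0))
        convert h0 using 1; ring
      exact h1.sub ((hf t ht).const_mul ε)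
    have hmono : MonotoneOn G (Icc (0:ℝ) 1) := by
      apply monotoneOn_of_deriv_nonneg (convex_Icc 0 1)
      · exact fun t ht => (hG' t ht).continuousAt.continuousWithinAt
      · intro t ht
        have ht' : t ∈ Icc (0:ℝ) 1 := interior_subset ht
        exact (hG' t ht').differentiableAt.differentiableWithinAt
      · intro t ht
        rw [interior_Icc] at ht
        have ht' : t ∈ Icc (0:ℝ) 1 := Ioo_subset_Icc_self ht
        rw [(hG' t ht').deriv]
        have h2 := key t ht'
        have h3 : ε * f' t - ε * f' 0 ≤ M * t := by
          rcases hε with h | h <;> subst h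
          · nlinarith [abs_le.1 h2]
          · nlinarith [abs_le.1 h2]
        linarith [h3]
    have := hmono (left_mem_Icc.2 (by norm_num)) (right_mem_Icc.2 (by norm_num)) zero_le_one
    simp only [hG] at this
    rcases hε with h | h <;> subst h <;> nlinarith [this]
  rw [abs_le]
  constructor
  · linarith [habs (-1) (Or.inr rfl)]
  · linarith [habs 1 (Or.inl rfl)]

lemma taylorBound {n : ℕ} {φ : EuclideanSpace ℝ (Fin n) → ℝ}
    {U : Set (EuclideanSpace ℝ (Fin n))} (hU : IsOpen U)
    (hφ : ContDiffOn ℝ 2 φ U)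
    {σ : Set (EuclideanSpace ℝ (Fin n))} (hσ : Convex ℝ σ) (hσU : σ ⊆ U)
    {β : ℝ} (hβ : ∀ ξ ∈ σ, ∀ q r : Fin n, |secondPartial φ q r ξ| ≤ β)
    {a b : EuclideanSpace ℝ (Fin n)} (ha : a ∈ σ) (hb : b ∈ σ) :
    |φ b - φ a - fderiv ℝ φ a (b - a)| ≤ β / 2 * (∑ q, |(b - a) q|)^2 := by
  set v := b - a with hv
  set F := fderiv ℝ φ with hF
  -- differentiability facts on U
  have hd1 : ∀ ξ ∈ U, DifferentiableAt ℝ φ ξ := fun ξ hξ =>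
    (hφ.contDiffAt (hU.mem_nhds hξ)).differentiableAt (by norm_num)
  have hd2 : ∀ ξ ∈ U, DifferentiableAt ℝ F ξ := fun ξ hξ =>
    ((hφ.contDiffAt (hU.mem_nhds hξ)).fderiv_right (m := 1) (by norm_num)).differentiableAt
      (by norm_num)
  -- the curve
  set c : ℝ → EuclideanSpace ℝ (Fin n) := fun t => a + t • v with hcurve
  have hc_deriv : ∀ t : ℝ, HasDerivAt c v t := by
    intro t
    have := ((hasDerivAt_id t).smul_const v).const_add a
    simp only [id, one_smul] at this
    exact this
  have hcσ : ∀ t ∈ Icc (0:ℝ) 1, c t ∈ σ := by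
    intro t ht
    have : c t = (1 - t) • a + t • b := by
      simp only [hcurve, hv]
      module
    rw [this]
    exact hσ ha hb (by linarith [ht.1, ht.2]) ht.1 (by linarith [ht.1, ht.2])
  have hcU : ∀ t ∈ Icc (0:ℝ) 1, c t ∈ U := fun t ht => hσU (hcσ t ht)
  -- first derivative of f := φ ∘ c
  set f : ℝ → ℝ := fun t => φ (c t) with hf
  set f' : ℝ → ℝ := fun t => F (c t) v with hf'
  set f'' : ℝ → ℝ := fun t => fderiv ℝ F (c t) v v with hf''
  have hfd : ∀ t ∈ Icc (0:ℝ) 1, HasDerivAt f (f' t) t := by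
    intro t ht
    exact ((hd1 _ (hcU t ht)).hasFDerivAt.comp_hasDerivAt t (hc_deriv t))
  have hfd' : ∀ t ∈ Icc (0:ℝ) 1, HasDerivAt f' (f'' t) t := by
    intro t ht
    have h1 : HasFDerivAt (fun w => F w v) ((fderiv ℝ F (c t)).flip v) (c t) := by
      have := (hd2 _ (hcU t ht)).hasFDerivAt.clm_apply (hasFDerivAt_const v (c t))
      simpa using this
    exact h1.comp_hasDerivAt t (hc_deriv t)
  have hbound : ∀ t ∈ Icc (0:ℝ) 1, |f'' t| ≤ β * (∑ q, |v q|)^2 := by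
    intro t ht
    exact bilinear_bound (hd2 _ (hcU t ht)) (fun q r => hβ _ (hcσ t ht) q r) v
  have := taylor2 hfd hfd' hbound
  have h0 : f 0 = φ a := by simp [hf, hcurve]
  have h1 : f 1 = φ b := by
    have : c 1 = b := by simp only [hcurve, one_smul, hv]; abel
    simp [hf, this]
  have h2 : f' 0 = fderiv ℝ φ a v := by simp [hf', hcurve, hF]
  rw [h0, h1, h2] at this
  linarith [this]

-- (∑ |w q|)² ≤ n ‖w‖²
lemma sq_sum_abs_le {n : ℕ} (w : EuclideanSpace ℝ (Fin n)) :
    (∑ q, |w q|)^2 ≤ n * ‖w‖^2 := by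
  have h1 := sq_sum_le_card_mul_sum_sq (α := ℝ) (s := (Finset.univ : Finset (Fin n)))
    (f := fun q => |w q|)
  rw [Finset.card_univ, Fintype.card_fin] at h1
  have h2 : ‖w‖^2 = ∑ q, w q ^ 2 := by
    rw [EuclideanSpace.norm_eq]
    rw [Real.sq_sqrt (by positivity)]
    simp [sq_abs]
  rw [h2]
  simpa [sq_abs] using h1

lemma barycentric {E : Type*} [AddCommGroup E] [Module ℝ E] {m : ℕ}
    (x : Fin m → E) {y : E} (hy : y ∈ convexHull ℝ (Set.range x)) :
    ∃ α : Fin m → ℝ, (∀ j, 0 ≤ α j) ∧ ∑ j, α j = 1 ∧ ∑ j, α j • x j = y := by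
  rw [convexHull_range_eq_exists_affineCombination] at hy
  obtain ⟨s, w, hw₀, hw₁, hwy⟩ := hy
  refine ⟨fun j => if j ∈ s then w j else 0, fun j => ?_, ?_, ?_⟩
  · by_cases h : j ∈ s
    · simp [h, hw₀ j h]
    · simp [h]
  · rw [← hw₁, Finset.sum_ite_mem, Finset.univ_inter]
  · rw [Finset.affineCombination_eq_linear_combination s x w hw₁] at hwy
    rw [← hwy]
    rw [show (∑ j, (if j ∈ s then w j else 0) • x j) = ∑ j, (if j ∈ s then w j • x j else 0) by
      refine Finset.sum_congr rfl fun j _ => ?_; split <;> simp]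
    rw [Finset.sum_ite_mem, Finset.univ_inter]
lemma diniDeriv_affine {n : ℕ} (V : EuclideanSpace ℝ (Fin n) → ℝ)
    (gradV : Fin n → ℝ) (ω : ℝ) (hV : ∀ y, V y = (∑ i, gradV i * y i) + ω)
    (g : EuclideanSpace ℝ (Fin n) → EuclideanSpace ℝ (Fin n))
    (y : EuclideanSpace ℝ (Fin n)) :
    diniDeriv V g y = ((∑ i, gradV i * g y i : ℝ) : EReal) := by
  unfold diniDeriv
  have hconst : ∀ h : ℝ, h ≠ 0 →
      (V (y + h • g y) - V y) / h = ∑ i, gradV i * g y i := by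
    intro h hh
    have : V (y + h • g y) - V y = h * ∑ i, gradV i * g y i := by
      simp only [hV, PiLp.add_apply, PiLp.smul_apply, smul_eq_mul, Finset.mul_sum]
      rw [show (∑ x : Fin n, gradV x * (y x + h * g y x) + ω - (∑ x : Fin n, gradV x * y x + ω))
          = ∑ x : Fin n, (gradV x * (y x + h * g y x) - gradV x * y x) by
        rw [Finset.sum_sub_distrib]; ring]
      congr 1; ext i; ring
    rw [this, mul_div_cancel_left₀ _ hh]
  have hev : (fun h : ℝ => (((V (y + h • g y) - V y) / h : ℝ) : EReal))
      =ᶠ[𝓝[>] (0:ℝ)] (fun _ => ((∑ i, gradV i * g y i : ℝ) : EReal)) := by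
    filter_upwards [self_mem_nhdsWithin] with h hh
    rw [hconst h (ne_of_gt hh)]
  rw [limsup_congr hev, limsup_const]

/-- per-vertex conditions with constant right-hand side `−b₂` imply
`D⁺V(x) ≤ −b̃₂ V(x)` on the simplex, with `b̃₂ = min { b₂ / V(x_j) : x_j ≠ 0 }`. -/
theorem stmt3 (n : ℕ)
    (x : Fin (n + 1) → EuclideanSpace ℝ (Fin n))
    (hx : LinearIndependent ℝ (fun j : Fin n => x j.succ - x 0))
    (g : EuclideanSpace ℝ (Fin n) → EuclideanSpace ℝ (Fin n))
    (U : Set (EuclideanSpace ℝ (Fin n))) (hU : IsOpen U)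
    (hσU : convexHull ℝ (Set.range x) ⊆ U)
    (hg : ContDiffOn ℝ 2 g U)
    (β : ℝ)
    (hβ : ∀ ξ ∈ convexHull ℝ (Set.range x), ∀ p q r : Fin n,
      |secondPartial (fun y => g y p) q r ξ| ≤ β)
    (V : EuclideanSpace ℝ (Fin n) → ℝ) (gradV : Fin n → ℝ) (ω : ℝ)
    (hV : ∀ y, V y = (∑ i, gradV i * y i) + ω)
    (l : Fin n → ℝ) (hl : ∀ i, |gradV i| ≤ l i)
    (c : Fin (n + 1) → ℝ)
    (hc : ∀ j, c j = ((n : ℝ) / 2) * ‖x j - x 0‖ *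
      ((⨆ k : Fin n, ‖x k.succ - x 0‖) + ‖x j - x 0‖))
    (b₂ : ℝ) (hb₂ : 0 < b₂)
    (hzero : ∀ j, x j = 0 →
      V (x j) = 0 ∧ (∑ i, g (x j) i * gradV i) + c j * β * (∑ i, l i) ≤ 0)
    (hnonzero : ∀ j, x j ≠ 0 →
      0 < V (x j) ∧ (∑ i, g (x j) i * gradV i) + c j * β * (∑ i, l i) ≤ -b₂)
    (hex : ∃ j, x j ≠ 0)
    (btilde : ℝ)
    (hbt : btilde = sInf {t : ℝ | ∃ j, x j ≠ 0 ∧ t = b₂ / V (x j)}) :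
    ∀ y ∈ convexHull ℝ (Set.range x), diniDeriv V g y ≤ ((-btilde * V y : ℝ) : EReal) := by
  intro y hy
  classical
  rw [diniDeriv_affine V gradV ω hV g y]
  rw [EReal.coe_le_coe_iff]
  -- basic setup
  have hn : 0 < n := by
    rcases Nat.eq_zero_or_pos n with h | h
    · obtain ⟨j0, hj0⟩ := hex
      exfalso
      apply hj0
      subst h
      ext i
      exact i.elim0
    · exact h
  set σ : Set (EuclideanSpace ℝ (Fin n)) := convexHull ℝ (Set.range x) with hσdef
  have hσconv : Convex ℝ σ := convex_convexHull ℝ _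
  have hxσ : ∀ j, x j ∈ σ := fun j => subset_convexHull ℝ _ ⟨j, rfl⟩
  have hβ0 : 0 ≤ β := le_trans (abs_nonneg _) (hβ (x 0) (hxσ 0) ⟨0, hn⟩ ⟨0, hn⟩ ⟨0, hn⟩)
  set M : ℝ := ⨆ k : Fin n, ‖x k.succ - x 0‖ with hMdef
  have hbdd : BddAbove (Set.range fun k : Fin n => ‖x k.succ - x 0‖) :=
    Set.Finite.bddAbove (Set.finite_range _)
  have hM0 : 0 ≤ M := le_trans (norm_nonneg _) (le_ciSup hbdd ⟨0, hn⟩)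
  have hM : ∀ j, ‖x j - x 0‖ ≤ M := by
    intro j
    rcases eq_or_ne j 0 with h | h
    · subst h; simpa using hM0
    · obtain ⟨k, rfl⟩ := Fin.eq_succ_of_ne_zero h
      exact le_ciSup hbdd k
  have hc0 : ∀ j, 0 ≤ c j := by
    intro j
    rw [hc j]
    have := hM j
    have := norm_nonneg (x j - x 0)
    positivity
  -- barycentric coordinates
  obtain ⟨α, hα0, hα1, hαy⟩ := barycentric x hy
  set d : Fin (n + 1) → ℝ := fun j => ‖x j - x 0‖ with hddef
  have hd0 : ∀ j, 0 ≤ d j := fun j => norm_nonneg _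
  have hyx0 : y - x 0 = ∑ j, α j • (x j - x 0) := by
    rw [← hαy]
    simp only [smul_sub]
    rw [Finset.sum_sub_distrib, ← Finset.sum_smul, hα1, one_smul]
  have hynorm : ‖y - x 0‖ ≤ ∑ j, α j * d j := by
    rw [hyx0]
    refine le_trans (norm_sum_le _ _) (le_of_eq ?_)
    refine Finset.sum_congr rfl fun j _ => ?_
    rw [norm_smul, Real.norm_eq_abs, abs_of_nonneg (hα0 j)]
  have hsum_d_le_M : ∑ j, α j * d j ≤ M := by
    calc ∑ j, α j * d j ≤ ∑ j, α j * M :=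
          Finset.sum_le_sum fun j _ => mul_le_mul_of_nonneg_left (hM j) (hα0 j)
      _ = M := by rw [← Finset.sum_mul, hα1, one_mul]
  -- the interpolation error bound
  have interp : ∀ p : Fin n, |g y p - ∑ j, α j * g (x j) p| ≤ β * ∑ j, α j * c j := by
    intro p
    set φ : EuclideanSpace ℝ (Fin n) → ℝ := fun w => g w p with hφdef
    have hφ : ContDiffOn ℝ 2 φ U := (EuclideanSpace.proj (𝕜 := ℝ) p).contDiff.comp_contDiffOn hg
    have hβφ : ∀ ξ ∈ σ, ∀ q r : Fin n, |secondPartial φ q r ξ| ≤ β :=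
      fun ξ hξ q r => hβ ξ hξ p q r
    set F0 := fderiv ℝ φ (x 0) with hF0def
    have T : ∀ b ∈ σ, |φ b - φ (x 0) - F0 (b - x 0)| ≤ β / 2 * ((n : ℝ) * ‖b - x 0‖^2) := by
      intro b hb
      refine le_trans (taylorBound hU hφ hσconv hσU hβφ (hxσ 0) hb) ?_
      exact mul_le_mul_of_nonneg_left (sq_sum_abs_le (b - x 0)) (by positivity)
    have hF0lin : F0 (y - x 0) = ∑ j, α j * F0 (x j - x 0) := by
      rw [hyx0, map_sum]
      exact Finset.sum_congr rfl fun j _ => by rw [map_smul]; rfl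
    have hident : g y p - ∑ j, α j * g (x j) p
        = (φ y - φ (x 0) - F0 (y - x 0))
          - ∑ j, α j * (φ (x j) - φ (x 0) - F0 (x j - x 0)) := by
      have e1 : ∑ j, α j * (φ (x j) - φ (x 0) - F0 (x j - x 0))
          = (∑ j, α j * φ (x j)) - (∑ j, α j) * φ (x 0) - ∑ j, α j * F0 (x j - x 0) := by
        simp_rw [mul_sub]
        rw [Finset.sum_sub_distrib, Finset.sum_sub_distrib, Finset.sum_mul]
      rw [e1, hα1, ← hF0lin]
      ring
    rw [hident]
    have hTj : ∀ j, |α j * (φ (x j) - φ (x 0) - F0 (x j - x 0))|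
        ≤ α j * (β / 2 * ((n : ℝ) * d j ^ 2)) := by
      intro j
      rw [abs_mul, abs_of_nonneg (hα0 j)]
      exact mul_le_mul_of_nonneg_left (T (x j) (hxσ j)) (hα0 j)
    have hy2 : ‖y - x 0‖^2 ≤ M * ∑ j, α j * d j := by
      have h1 : ‖y - x 0‖^2 ≤ (∑ j, α j * d j)^2 := by
        have := hynorm
        nlinarith [norm_nonneg (y - x 0)]
      have h2 : (∑ j, α j * d j)^2 ≤ M * ∑ j, α j * d j := by
        have h3 : 0 ≤ ∑ j, α j * d j :=
          Finset.sum_nonneg fun j _ => mul_nonneg (hα0 j) (hd0 j)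
        nlinarith [hsum_d_le_M]
      linarith
    calc |(φ y - φ (x 0) - F0 (y - x 0))
          - ∑ j, α j * (φ (x j) - φ (x 0) - F0 (x j - x 0))|
        ≤ |φ y - φ (x 0) - F0 (y - x 0)|
          + |∑ j, α j * (φ (x j) - φ (x 0) - F0 (x j - x 0))| := abs_sub _ _
      _ ≤ β / 2 * ((n : ℝ) * ‖y - x 0‖^2)
          + ∑ j, α j * (β / 2 * ((n : ℝ) * d j ^ 2)) := by
          refine add_le_add (T y hy) ?_
          exact le_trans (Finset.abs_sum_le_sum_abs _ _) (Finset.sum_le_sum fun j _ => hTj j)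
      _ ≤ β / 2 * ((n : ℝ) * (M * ∑ j, α j * d j))
          + ∑ j, α j * (β / 2 * ((n : ℝ) * d j ^ 2)) := by
          refine add_le_add_left (mul_le_mul_of_nonneg_left
            (mul_le_mul_of_nonneg_left hy2 (by positivity)) (by positivity)) _
      _ = β * ∑ j, α j * c j := by
          have hpull : β / 2 * ((n : ℝ) * (M * ∑ j, α j * d j))
              = ∑ j, β / 2 * ((n : ℝ) * (M * (α j * d j))) := by
            simp_rw [Finset.mul_sum]
          rw [hpull, Finset.mul_sum, ← Finset.sum_add_distrib]
          refine Finset.sum_congr rfl fun j _ => ?_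
          rw [hc j]
          simp only [hddef]
          ring
  -- putting everything together
  set L : ℝ := ∑ i, l i with hLdef
  have hl0 : ∀ i, 0 ≤ l i := fun i => le_trans (abs_nonneg _) (hl i)
  have hL0 : 0 ≤ L := Finset.sum_nonneg fun i _ => hl0 i
  set K : ℝ := β * ∑ j, α j * c j with hKdef
  have hK0 : 0 ≤ K :=
    mul_nonneg hβ0 (Finset.sum_nonneg fun j _ => mul_nonneg (hα0 j) (hc0 j))
  have happ : ∀ i : Fin n, y i = ∑ j, α j * x j i := by
    intro i
    calc y i = EuclideanSpace.proj (𝕜 := ℝ) i y := rfl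
      _ = EuclideanSpace.proj (𝕜 := ℝ) i (∑ j, α j • x j) := by rw [hαy]
      _ = ∑ j, EuclideanSpace.proj (𝕜 := ℝ) i (α j • x j) := map_sum _ _ _
      _ = ∑ j, α j * x j i := Finset.sum_congr rfl fun j _ => by rw [map_smul]; rfl
  have hVy : V y = ∑ j, α j * V (x j) := by
    rw [hV y]
    have e1 : ∑ j, α j * V (x j) = ∑ j, (α j * ∑ i, gradV i * x j i) + (∑ j, α j) * ω := by
      simp_rw [hV, mul_add]
      rw [Finset.sum_add_distrib, Finset.sum_mul]
    rw [e1, hα1, one_mul]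
    congr 1
    simp_rw [happ, Finset.mul_sum]
    rw [Finset.sum_comm]
    refine Finset.sum_congr rfl fun j _ => Finset.sum_congr rfl fun i _ => by ring
  -- step 1
  have step1 : ∑ i, gradV i * g y i
      ≤ (∑ j, α j * ∑ i, g (x j) i * gradV i) + L * K := by
    have eswap : (∑ j, α j * ∑ i, g (x j) i * gradV i)
        = ∑ i, gradV i * (∑ j, α j * g (x j) i) := by
      simp_rw [Finset.mul_sum]
      rw [Finset.sum_comm]
      exact Finset.sum_congr rfl fun i _ => Finset.sum_congr rfl fun j _ => by ring
    have e2 : ∑ i, gradV i * g y i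
        = (∑ j, α j * ∑ i, g (x j) i * gradV i)
          + ∑ i, gradV i * (g y i - ∑ j, α j * g (x j) i) := by
      rw [eswap, ← Finset.sum_add_distrib]
      refine Finset.sum_congr rfl fun i _ => ?_
      ring
    rw [e2]
    refine add_le_add_right ?_ _
    calc ∑ i, gradV i * (g y i - ∑ j, α j * g (x j) i)
        ≤ ∑ i, l i * K := by
          refine Finset.sum_le_sum fun i _ => ?_
          calc gradV i * (g y i - ∑ j, α j * g (x j) i)
              ≤ |gradV i * (g y i - ∑ j, α j * g (x j) i)| := le_abs_self _
            _ = |gradV i| * |g y i - ∑ j, α j * g (x j) i| := abs_mul _ _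
            _ ≤ l i * K := mul_le_mul (hl i) (interp i) (abs_nonneg _) (hl0 i)
      _ = L * K := by rw [← Finset.sum_mul]
  -- step 2
  have step2 : (∑ j, α j * ∑ i, g (x j) i * gradV i) + L * K
      ≤ ∑ j, α j * (if x j = 0 then (0:ℝ) else -b₂) := by
    have e3 : L * K = ∑ j, α j * (c j * β * L) := by
      rw [hKdef]
      simp_rw [Finset.mul_sum]
      refine Finset.sum_congr rfl fun j _ => by ring
    rw [e3, ← Finset.sum_add_distrib]
    refine Finset.sum_le_sum fun j _ => ?_
    rw [← mul_add]
    refine mul_le_mul_of_nonneg_left ?_ (hα0 j)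
    by_cases h : x j = 0
    · rw [if_pos h]; exact (hzero j h).2
    · rw [if_neg h]; exact (hnonzero j h).2
  -- step 3
  have hbtle : ∀ j, x j ≠ 0 → btilde ≤ b₂ / V (x j) := by
    intro j hj
    rw [hbt]
    refine csInf_le ?_ ⟨j, hj, rfl⟩
    refine ⟨0, fun t ht => ?_⟩
    obtain ⟨j', hj', rfl⟩ := ht
    exact le_of_lt (div_pos hb₂ (hnonzero j' hj').1)
  have step3 : ∑ j, α j * (if x j = 0 then (0:ℝ) else -b₂) ≤ -btilde * V y := by
    rw [hVy, Finset.mul_sum]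
    rw [show ∑ j, -btilde * (α j * V (x j)) = ∑ j, α j * (-btilde * V (x j)) from
      Finset.sum_congr rfl fun j _ => by ring]
    refine Finset.sum_le_sum fun j _ => ?_
    refine mul_le_mul_of_nonneg_left ?_ (hα0 j)
    by_cases h : x j = 0
    · rw [if_pos h, (hzero j h).1]
      simp
    · rw [if_neg h]
      have hV0 := (hnonzero j h).1
      have hle := hbtle j h
      have h2 : btilde * V (x j) ≤ b₂ := by
        rw [div_eq_mul_inv] at hle
        calc btilde * V (x j) ≤ (b₂ * (V (x j))⁻¹) * V (x j) :=
              mul_le_mul_of_nonneg_right hle (le_of_lt hV0)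
          _ = b₂ := by field_simp
      linarith
  linarith [step1, step2, step3]
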